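/- Let G = P ⋊ K with P, K finite of coprime orders, and suppose K acts faithfully on P (equivalently C_G(P) = Z(P)). If φ is an automorphism of G whose restriction to P is the identity, then φ equals conjugation by some element w ∈ Z(P). -/

import Mathlib

open scoped Pointwise
open scoped IsMulCommutative


/-- Let `G = P ⋊ K` with `P`, `K` finite of coprime orders, and suppose `K` acts
faithfully on `P` (i.e. `C_K(P) = 1`). If `φ` is an automorphism of `G` whose
restriction to `P` is the identity, then `φ` equals conjugation by some element
`w ∈ Z(P)`. -/
theorem aut_restrict_id_is_inner {G : Type*} [Group G] [Finite G] (P K : Subgroup G)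
    [P.Normal] (hPK : P ⊓ K = ⊥) (hsup : P ⊔ K = ⊤)
    (hco : Nat.Coprime (Nat.card P) (Nat.card K))
    (hfaith : K ⊓ Subgroup.centralizer (P : Set G) = ⊥)
    (φ : G ≃* G) (hφ : ∀ x ∈ P, φ x = x) :
    ∃ w ∈ P ⊓ Subgroup.centralizer (P : Set G), ∀ g : G, φ g = w * g * w⁻¹ := by
  classical
  set C := Subgroup.centralizer (P : Set G) with hCdef
  have hPn : P.Normal := ‹P.Normal›
  -- `C` is normal in `G`
  haveI hCn : C.Normal := by
    constructor
    intro c hc g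
    rw [hCdef, Subgroup.mem_centralizer_iff] at hc ⊢
    intro h hh
    have h1 : g⁻¹ * h * g ∈ P := hPn.conj_mem' h hh g
    have h2 := hc _ h1
    calc h * (g * c * g⁻¹) = g * ((g⁻¹ * h * g) * c) * g⁻¹ := by group
      _ = g * (c * (g⁻¹ * h * g)) * g⁻¹ := by rw [h2]
      _ = (g * c * g⁻¹) * h := by group
  -- `P` and `K` are complements
  have hcompl : P.IsComplement' K := by
    apply Subgroup.isComplement'_of_disjoint_and_mul_eq_univ (disjoint_iff.mpr hPK)
    rw [← Subgroup.normal_mul, hsup, Subgroup.coe_top]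
  have hcardG : Nat.card P * Nat.card K = Nat.card G := hcompl.card_mul
  have hK0 : 0 < Nat.card K := Nat.card_pos
  -- `Nat.card C` divides `Nat.card P`
  have hCdvd : Nat.card C ∣ Nat.card P := by
    have h1 : C.relIndex (K ⊔ C) = C.relIndex K := Subgroup.relIndex_sup_right K C
    have h2 : C.relIndex K = Nat.card K := by
      rw [Subgroup.relIndex, Subgroup.subgroupOf_eq_bot.mpr
        (disjoint_iff.mpr (by rw [inf_comm]; exact hfaith)), Subgroup.index_bot]
    have h3 : C.relIndex (K ⊔ C) * (K ⊔ C).index = C.index :=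
      Subgroup.relIndex_mul_index le_sup_right
    have h4 : Nat.card C * C.index = Nat.card G := C.card_mul_index
    refine ⟨(K ⊔ C).index, ?_⟩
    have h5 : Nat.card P * Nat.card K
        = (Nat.card C * (K ⊔ C).index) * Nat.card K := by
      rw [hcardG, ← h4, ← h3, h1, h2]; ring
    exact Nat.eq_of_mul_eq_mul_right hK0 h5
  -- `C ≤ P`
  have hCP : C ≤ P := by
    intro c hc
    have hPidx : P.index = Nat.card K := hcompl.symm.index_eq_card
    have hcard_quot : Nat.card (G ⧸ P) = Nat.card K := by
      rw [← hPidx]; rfl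
    have h1 : orderOf (QuotientGroup.mk c : G ⧸ P) ∣ Nat.card K := by
      have := orderOf_dvd_natCard (QuotientGroup.mk c : G ⧸ P)
      rwa [hcard_quot] at this
    have h2 : orderOf (QuotientGroup.mk c : G ⧸ P) ∣ Nat.card P := by
      have ha : orderOf (QuotientGroup.mk c : G ⧸ P) ∣ orderOf c :=
        orderOf_map_dvd (QuotientGroup.mk' P) c
      have hb : orderOf c ∣ Nat.card C := by
        have := orderOf_dvd_natCard (⟨c, hc⟩ : C)
        rwa [← Subgroup.orderOf_coe] at this
      exact ha.trans (hb.trans hCdvd)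
    have h3 : orderOf (QuotientGroup.mk c : G ⧸ P) = 1 :=
      Nat.eq_one_of_dvd_coprimes hco h2 h1
    rw [orderOf_eq_one_iff] at h3
    exact (QuotientGroup.eq_one_iff c).mp h3
  -- The abelian subgroup `A = P ⊓ C = Z(P)`
  set A : Subgroup G := P ⊓ C with hAdef
  haveI hAcomm : IsMulCommutative A := by
    constructor
    constructor
    intro a b
    have ha := (Subgroup.mem_inf.mp a.2).2
    have hb := (Subgroup.mem_inf.mp b.2).1
    exact Subtype.ext ((Subgroup.mem_centralizer_iff.mp ha b.1 hb).symm)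
  -- the "cocycle" θ
  have hθC : ∀ k : K, (k : G)⁻¹ * φ k ∈ C := by
    intro k
    rw [hCdef, Subgroup.mem_centralizer_iff]
    intro p hp
    have h1 : (k : G) * p * (k : G)⁻¹ ∈ P := hPn.conj_mem p hp k
    have h2 : φ ((k : G) * p * (k : G)⁻¹) = (k : G) * p * (k : G)⁻¹ := hφ _ h1
    rw [map_mul, map_mul, hφ p hp, map_inv] at h2
    have h3 : (k : G) * p * (k : G)⁻¹ * φ k = φ (k : G) * p := by
      rw [← h2]; group
    calc p * ((k : G)⁻¹ * φ k)
        = (k : G)⁻¹ * ((k : G) * p * (k : G)⁻¹ * φ k) := by group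
      _ = (k : G)⁻¹ * (φ (k : G) * p) := by rw [h3]
      _ = ((k : G)⁻¹ * φ k) * p := by group
  have hθA : ∀ k : K, (k : G)⁻¹ * φ k ∈ A :=
    fun k => Subgroup.mem_inf.mpr ⟨hCP (hθC k), hθC k⟩
  set Θ : K → A := fun k => ⟨(k : G)⁻¹ * φ k, hθA k⟩ with hΘdef
  -- conjugation maps on A
  have hconjA : ∀ (g : G) (a : A), g * (a : G) * g⁻¹ ∈ A := by
    intro g a
    obtain ⟨h1, h2⟩ := Subgroup.mem_inf.mp a.2
    exact Subgroup.mem_inf.mpr ⟨hPn.conj_mem _ h1 g, hCn.conj_mem _ h2 g⟩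
  set κ : G → (A →* A) := fun g =>
    { toFun := fun a => ⟨g * (a : G) * g⁻¹, hconjA g a⟩
      map_one' := by ext; simp
      map_mul' := by
        intro a b
        ext
        show g * ((a : G) * (b : G)) * g⁻¹ = (g * a * g⁻¹) * (g * b * g⁻¹)
        group } with hκdef
  -- cocycle identity
  have hcoc : ∀ k₁ k₂ : K, Θ (k₁ * k₂) = κ ((k₂ : G)⁻¹) (Θ k₁) * Θ k₂ := by
    intro k₁ k₂
    ext
    show ((k₁ : G) * (k₂ : G))⁻¹ * φ ((k₁ : G) * (k₂ : G))
        = ((k₂ : G)⁻¹ * ((k₁ : G)⁻¹ * φ k₁) * ((k₂ : G)⁻¹)⁻¹)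
          * ((k₂ : G)⁻¹ * φ k₂)
    rw [map_mul]
    group
  haveI : Fintype K := Fintype.ofFinite K
  set n : ℕ := Nat.card K with hndef
  set S : A := ∏ k : K, Θ k with hSdef
  have key : ∀ k₂ : K, S = κ ((k₂ : G)⁻¹) S * Θ k₂ ^ n := by
    intro k₂
    have h1 : S = ∏ k₁ : K, Θ (k₁ * k₂) := by
      rw [hSdef]
      exact (Equiv.prod_comp (Equiv.mulRight k₂) Θ).symm
    calc S = ∏ k₁ : K, Θ (k₁ * k₂) := h1
      _ = κ ((k₂ : G)⁻¹) S * Θ k₂ ^ n := by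
          simp_rw [hcoc]
          rw [Finset.prod_mul_distrib, ← map_prod (κ ((k₂ : G)⁻¹)) Θ Finset.univ,
            Finset.prod_const, Finset.card_univ, ← hSdef, hndef,
            Nat.card_eq_fintype_card]
  -- coprimality and the n-th root
  have hA : Nat.Coprime (Nat.card A) n :=
    hco.coprime_dvd_left (Subgroup.card_dvd_of_le inf_le_left)
  set T : A := (powCoprime hA).symm S with hTdef
  have hT : T ^ n = S := by
    have := (powCoprime hA).apply_symm_apply S
    rwa [powCoprime_apply] at this
  have hw : ∀ k : K, Θ k = κ ((k : G)⁻¹) T⁻¹ * T := by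
    intro k
    apply hA.pow_left_bijective.injective
    show Θ k ^ n = (κ ((k : G)⁻¹) T⁻¹ * T) ^ n
    have h2 : Θ k ^ n = (κ ((k : G)⁻¹) S)⁻¹ * S :=
      eq_inv_mul_iff_mul_eq.mpr (key k).symm
    rw [h2, mul_pow, ← map_pow, inv_pow, hT, map_inv]
  -- conclusion
  refine ⟨((T⁻¹ : A) : G), (T⁻¹ : A).2, ?_⟩
  intro g
  have hg : g ∈ (P : Set G) * (K : Set G) := by
    rw [← Subgroup.normal_mul, hsup, Subgroup.coe_top]
    exact Set.mem_univ g
  obtain ⟨p, hp, k, hk, rfl⟩ := hg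
  have hk'' : k⁻¹ * φ k = (k⁻¹ * ((T : G))⁻¹ * (k⁻¹)⁻¹) * (T : G) :=
    congrArg Subtype.val (hw ⟨k, hk⟩)
  have hφk : φ k = ((T : G))⁻¹ * k * (((T : G))⁻¹)⁻¹ := by
    calc φ k = k * (k⁻¹ * φ k) := by group
      _ = k * ((k⁻¹ * ((T : G))⁻¹ * (k⁻¹)⁻¹) * (T : G)) := by rw [hk'']
      _ = ((T : G))⁻¹ * k * (((T : G))⁻¹)⁻¹ := by group
  have hpw : p * ((T : G))⁻¹ = ((T : G))⁻¹ * p := by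
    have hTC := (Subgroup.mem_inf.mp (T⁻¹ : A).2).2
    have := Subgroup.mem_centralizer_iff.mp hTC p hp
    exact this
  calc φ (p * k) = p * φ k := by rw [map_mul, hφ p hp]
    _ = p * (((T : G))⁻¹ * k * (((T : G))⁻¹)⁻¹) := by rw [hφk]
    _ = (p * ((T : G))⁻¹) * k * (((T : G))⁻¹)⁻¹ := by group
    _ = (((T : G))⁻¹ * p) * k * (((T : G))⁻¹)⁻¹ := by rw [hpw]
    _ = ((T⁻¹ : A) : G) * (p * k) * (((T⁻¹ : A) : G))⁻¹ := by
        simp only [Subgroup.coe_inv]; group
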